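/- Let G be a connected finite simple graph of diameter at least 3 and let T be a spanning tree of G. Then every vertex of G has a neighbor in G that is an inner vertex of T. -/
import Mathlib


open SimpleGraph

variable {V : Type*}

/-- `T` is a spanning tree of `G`: a subgraph on all of `V` that is connected and acyclic. -/
def IsSpanningTree (G T : SimpleGraph V) : Prop :=
  T ≤ G ∧ T.Connected ∧ T.IsAcyclic

/-- The set of inner vertices of `T` (degree at least 2). -/
def innerSet (T : SimpleGraph V) : Set V :=
  {v | 2 ≤ (T.neighborSet v).ncard}

/-- Vertices that are inner vertices of at least two trees of the family. -/
def innerMulti {k : ℕ} (T : Fin k → SimpleGraph V) : Set V :=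
  {v | ∃ i j : Fin k, i ≠ j ∧ v ∈ innerSet (T i) ∧ v ∈ innerSet (T j)}

/-- Edges that belong to at least two trees of the family. -/
def edgeMulti {k : ℕ} (T : Fin k → SimpleGraph V) : Set (Sym2 V) :=
  {e | ∃ i j : Fin k, i ≠ j ∧ e ∈ (T i).edgeSet ∧ e ∈ (T j).edgeSet}

/-- A connected dominating set. -/
def IsConnDomSet (G : SimpleGraph V) (D : Set V) : Prop :=
  (G.induce D).Connected ∧ ∀ v ∉ D, ∃ w ∈ D, G.Adj v w

/-- In a connected graph of diameter at least 3, every vertex has a neighbor that is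
an inner vertex of any given spanning tree. -/
theorem neighbor_inner_of_diam_ge_three [Fintype V] (G : SimpleGraph V) (hG : G.Connected)
    (hdiam : ∃ x y : V, 3 ≤ G.dist x y)
    (T : SimpleGraph V) (hT : IsSpanningTree G T) (u : V) :
    ∃ w : V, G.Adj u w ∧ w ∈ innerSet T := by
  obtain ⟨hle, hconn, _⟩ := hT
  classical
  by_contra hcon
  push_neg at hcon
  -- every vertex distinct from u is T-adjacent to u
  have key : ∀ x : V, x ≠ u → T.Adj u x := by
    intro x hx
    obtain ⟨p0⟩ := hconn u x
    obtain ⟨p, hp⟩ := p0.toPath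
    clear p0
    cases p with
    | nil => exact absurd rfl hx.symm
    | @cons _ w _ h q =>
      cases q with
      | nil => exact h
      | @cons _ z _ h2 q' =>
        exfalso
        have hu : u ∈ T.neighborSet w := h.symm
        have hz : z ∈ T.neighborSet w := h2
        obtain ⟨_, hus⟩ := (SimpleGraph.Walk.cons_isPath_iff _ _).mp hp
        have huz : u ≠ z := by
          intro he
          apply hus
          rw [he, SimpleGraph.Walk.support_cons]
          exact List.mem_cons_of_mem _ (SimpleGraph.Walk.start_mem_support _)
        have hw : w ∈ innerSet T := by
          have : 1 < (T.neighborSet w).ncard :=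
            (Set.one_lt_ncard (Set.toFinite _)).mpr ⟨u, hu, z, hz, huz⟩
          exact this
        exact hcon w (hle h) hw
  -- hence G-distance from u to anything is ≤ 1
  have hdist : ∀ x : V, G.dist u x ≤ 1 := by
    intro x
    by_cases hx : x = u
    · simp [hx, SimpleGraph.dist_self]
    · have : G.Adj u x := hle (key x hx)
      calc G.dist u x ≤ (SimpleGraph.Walk.cons this SimpleGraph.Walk.nil).length :=
            SimpleGraph.dist_le _
        _ = 1 := by simp
  obtain ⟨x, y, hxy⟩ := hdiam
  have h1 : G.dist x y ≤ G.dist x u + G.dist u y := hG.dist_triangle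
  have h2 : G.dist x u ≤ 1 := by rw [G.dist_comm]; exact hdist x
  have h3 : G.dist u y ≤ 1 := hdist y
  omega
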